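/- (QIVPM composition implies ultramodular) Let ℓ, r : ℝ → ℝ satisfy 0 ≤ ℓ x ≤ r x ≤ 1 for all x ∈ [0,1]. Suppose that for every d ≥ 1 and every quantum probability measure μ on ℂ^d, the pair L P = ℓ (μ P), R P = r (μ P) is a QIVPM on ℂ^d. Then (ℓ, r) is an ultramodular interval-valued map on [0,1]. -/

import Mathlib

open Matrix
open scoped ComplexOrder

/-- A projector on `ℂ^d`: an idempotent, self-adjoint matrix. -/
def IsProjector {d : ℕ} (P : Matrix (Fin d) (Fin d) ℂ) : Prop :=
  P * P = P ∧ Pᴴ = P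

/-- A quantum interval-valued probability measure (QIVPM) on `ℂ^d`,
given by the pair of interval-endpoint functions `L ≤ R`. -/
def IsQIVPM {d : ℕ} (L R : Matrix (Fin d) (Fin d) ℂ → ℝ) : Prop :=
  (∀ P, IsProjector P → 0 ≤ L P ∧ L P ≤ R P ∧ R P ≤ 1) ∧
  (L 0 = 0 ∧ R 0 = 0) ∧
  (L 1 = 1 ∧ R 1 = 1) ∧
  (∀ P, IsProjector P → L (1 - P) = 1 - R P ∧ R (1 - P) = 1 - L P) ∧
  (∀ P₀ P₁, IsProjector P₀ → IsProjector P₁ → P₀ * P₁ = P₁ * P₀ →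
    L P₀ + L P₁ ≤ L (P₀ + P₁ - P₀ * P₁) + L (P₀ * P₁) ∧
    R (P₀ + P₁ - P₀ * P₁) + R (P₀ * P₁) ≤ R P₀ + R P₁)

/-- A QIVPM is `δ`-deterministic if every projector's interval lies in `[0,δ]` or `[1-δ,1]`. -/
def IsDeltaDet {d : ℕ} (δ : ℝ) (L R : Matrix (Fin d) (Fin d) ℂ → ℝ) : Prop :=
  ∀ P, IsProjector P → R P ≤ δ ∨ 1 - δ ≤ L P

/-- A QIVPM is `0`-deterministic if every projector is assigned `[0,0]` or `[1,1]`. -/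
def IsZeroDet {d : ℕ} (L R : Matrix (Fin d) (Fin d) ℂ → ℝ) : Prop :=
  ∀ P, IsProjector P → (L P = 0 ∧ R P = 0) ∨ (L P = 1 ∧ R P = 1)

/-- A state (density matrix) on `ℂ^d`. -/
def IsState {d : ℕ} (ρ : Matrix (Fin d) (Fin d) ℂ) : Prop :=
  ρ.PosSemidef ∧ ρ.trace = 1

/-- An interval-valued map on `[0,1]`. -/
def IsIntervalValuedMap (l r : ℝ → ℝ) : Prop :=
  ∀ x ∈ Set.Icc (0:ℝ) 1, 0 ≤ l x ∧ l x ≤ r x ∧ r x ≤ 1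

/-- An ultramodular interval-valued map on `[0,1]`. -/
def IsUltramodular (l r : ℝ → ℝ) : Prop :=
  IsIntervalValuedMap l r ∧
  (l 0 = 0 ∧ r 0 = 0) ∧
  (l 1 = 1 ∧ r 1 = 1) ∧
  (∀ x ∈ Set.Icc (0:ℝ) 1, l (1 - x) = 1 - r x ∧ r (1 - x) = 1 - l x) ∧
  (∀ x₀ x₁ x₂ : ℝ, 0 ≤ x₀ → 0 ≤ x₁ → 0 ≤ x₂ → x₀ + x₁ + x₂ ≤ 1 →
    l (x₀ + x₂) + l (x₁ + x₂) ≤ l (x₀ + x₁ + x₂) + l x₂ ∧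
    r (x₀ + x₁ + x₂) + r x₂ ≤ r (x₀ + x₂) + r (x₁ + x₂))

/-- A (sharp) quantum probability measure on `ℂ^d`. -/
def IsQPM {d : ℕ} (μ : Matrix (Fin d) (Fin d) ℂ → ℝ) : Prop :=
  (∀ P, IsProjector P → 0 ≤ μ P ∧ μ P ≤ 1) ∧
  μ 0 = 0 ∧ μ 1 = 1 ∧
  (∀ P, IsProjector P → μ (1 - P) = 1 - μ P) ∧
  (∀ P₀ P₁, IsProjector P₀ → IsProjector P₁ → P₀ * P₁ = 0 → μ (P₀ + P₁) = μ P₀ + μ P₁)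

lemma trace_re_nonneg {d : ℕ} {M : Matrix (Fin d) (Fin d) ℂ} (hM : M.PosSemidef) :
    0 ≤ M.trace.re := by
  have h : ∀ i, 0 ≤ M i i := fun i => by
    exact hM.diag_nonneg
  rw [Matrix.trace]
  rw [Complex.re_sum]
  exact Finset.sum_nonneg fun i _ => (Complex.le_def.mp (h i)).1

noncomputable def traceMeas {d : ℕ} (ρ : Matrix (Fin d) (Fin d) ℂ) :
    Matrix (Fin d) (Fin d) ℂ → ℝ := fun P => (ρ * P).trace.re

lemma traceMeas_nonneg {d : ℕ} {ρ P : Matrix (Fin d) (Fin d) ℂ}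
    (hρ : ρ.PosSemidef) (hP : IsProjector P) : 0 ≤ traceMeas ρ P := by
  have h1 : (ρ * P).trace = (P * ρ * Pᴴ).trace := by
    rw [hP.2]
    conv_lhs => rw [← hP.1]
    rw [← Matrix.mul_assoc, Matrix.trace_mul_comm (ρ * P) P, Matrix.mul_assoc]
  unfold traceMeas
  rw [h1]
  exact trace_re_nonneg (hρ.mul_mul_conjTranspose_same P)

lemma isProjector_compl {d : ℕ} {P : Matrix (Fin d) (Fin d) ℂ} (hP : IsProjector P) :
    IsProjector (1 - P) := by
  constructor
  · rw [Matrix.sub_mul, Matrix.mul_sub, Matrix.mul_sub, hP.1]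
    simp
  · rw [Matrix.conjTranspose_sub, hP.2, Matrix.conjTranspose_one]

lemma traceMeas_compl {d : ℕ} {ρ : Matrix (Fin d) (Fin d) ℂ} (hρ : IsState ρ)
    (P : Matrix (Fin d) (Fin d) ℂ) : traceMeas ρ (1 - P) = 1 - traceMeas ρ P := by
  unfold traceMeas
  rw [Matrix.mul_sub, Matrix.mul_one, Matrix.trace_sub, Complex.sub_re, hρ.2]
  norm_num

lemma isQPM_traceMeas {d : ℕ} {ρ : Matrix (Fin d) (Fin d) ℂ} (hρ : IsState ρ) :
    IsQPM (traceMeas ρ) := by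
  refine ⟨fun P hP => ⟨traceMeas_nonneg hρ.1 hP, ?_⟩, ?_, ?_, fun P _ => traceMeas_compl hρ P, ?_⟩
  · have := traceMeas_nonneg hρ.1 (isProjector_compl hP)
    rw [traceMeas_compl hρ] at this
    linarith
  · simp [traceMeas]
  · simp [traceMeas, hρ.2]
  · intro P₀ P₁ _ _ _
    simp [traceMeas, Matrix.mul_add, Complex.add_re]

lemma isProjector_diagonal_01 {d : ℕ} (v : Fin d → ℂ) (hv : ∀ i, v i = 0 ∨ v i = 1) :
    IsProjector (Matrix.diagonal v) := by
  constructor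
  · rw [Matrix.diagonal_mul_diagonal]
    have h1 : (fun i => v i * v i) = v :=
      funext fun i => by rcases hv i with h | h <;> simp [h]
    rw [h1]
  · rw [Matrix.diagonal_conjTranspose]
    have h1 : star v = v :=
      funext fun i => by rcases hv i with h | h <;> simp [h, Pi.star_apply]
    rw [h1]

lemma traceMeas_diag {d : ℕ} (w : Fin d → ℝ) (v : Fin d → ℂ) :
    traceMeas (Matrix.diagonal (fun i => (w i : ℂ))) (Matrix.diagonal v)
      = ∑ i, w i * (v i).re := by
  unfold traceMeas
  rw [Matrix.diagonal_mul_diagonal, Matrix.trace_diagonal, Complex.re_sum]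
  congr 1
  funext i
  simp [Complex.mul_re]

lemma isState_diag {d : ℕ} (w : Fin d → ℝ) (hw : ∀ i, 0 ≤ w i) (hsum : ∑ i, w i = 1) :
    IsState (Matrix.diagonal (fun i => (w i : ℂ))) := by
  constructor
  · rw [Matrix.posSemidef_diagonal_iff]
    intro i
    exact_mod_cast Complex.zero_le_real.mpr (hw i)
  · rw [Matrix.trace_diagonal]
    rw [← Complex.ofReal_sum, hsum]
    norm_num

/-- If composing `(l, r)` with every quantum probability measure (in every dimension
`d ≥ 1`) yields a QIVPM, then `(l, r)` is ultramodular. -/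
theorem QIVPM_comp_implies_ultramodular (l r : ℝ → ℝ)
    (hmap : IsIntervalValuedMap l r)
    (hcomp : ∀ d : ℕ, 1 ≤ d → ∀ μ : Matrix (Fin d) (Fin d) ℂ → ℝ, IsQPM μ →
      IsQIVPM (fun P => l (μ P)) (fun P => r (μ P))) :
    IsUltramodular l r := by
  -- a fixed state to extract the boundary values
  have hst1 : IsState (Matrix.diagonal (fun i => ((![1,0,0,0] : Fin 4 → ℝ) i : ℂ))) := by
    apply isState_diag
    · intro i; fin_cases i <;> norm_num
    · simp [Fin.sum_univ_four]
  have hμ1 := isQPM_traceMeas hst1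
  have hQ1 := hcomp 4 (by norm_num) _ hμ1
  have hl0 : l 0 = 0 := by
    have := hQ1.2.1.1
    simp only at this
    rwa [hμ1.2.1] at this
  have hr0 : r 0 = 0 := by
    have := hQ1.2.1.2
    simp only at this
    rwa [hμ1.2.1] at this
  have hl1 : l 1 = 1 := by
    have := hQ1.2.2.1.1
    simp only at this
    rwa [hμ1.2.2.1] at this
  have hr1 : r 1 = 1 := by
    have := hQ1.2.2.1.2
    simp only at this
    rwa [hμ1.2.2.1] at this
  refine ⟨hmap, ⟨hl0, hr0⟩, ⟨hl1, hr1⟩, ?_, ?_⟩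
  · -- reflection
    rintro x ⟨hx0, hx1⟩
    set w : Fin 4 → ℝ := ![x, 1-x, 0, 0] with hw
    have hst : IsState (Matrix.diagonal (fun i => (w i : ℂ))) := by
      apply isState_diag
      · intro i; fin_cases i <;> (simp [hw]; try linarith)
      · simp [hw, Fin.sum_univ_four]
    have hμ := isQPM_traceMeas hst
    have hQ := hcomp 4 (by norm_num) _ hμ
    set P : Matrix (Fin 4) (Fin 4) ℂ := Matrix.diagonal ![1,0,0,0] with hP
    have hPproj : IsProjector P := by
      apply isProjector_diagonal_01
      intro i; fin_cases i <;> simp [hP]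
    have hμP : traceMeas (Matrix.diagonal (fun i => (w i : ℂ))) P = x := by
      rw [hP, traceMeas_diag]
      simp [hw, Fin.sum_univ_four]
    have hμP' : traceMeas (Matrix.diagonal (fun i => (w i : ℂ))) (1 - P) = 1 - x := by
      rw [hμ.2.2.2.1 P hPproj, hμP]
    have := hQ.2.2.2.1 P hPproj
    simp only at this
    rw [hμP, hμP'] at this
    exact this
  · -- ultramodularity
    intro x₀ x₁ x₂ h0 h1 h2 hs
    set w : Fin 4 → ℝ := ![x₀, x₁, x₂, 1-(x₀+x₁+x₂)] with hw
    have hst : IsState (Matrix.diagonal (fun i => (w i : ℂ))) := by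
      apply isState_diag
      · intro i; fin_cases i <;> (simp [hw]; try linarith)
      · simp [hw, Fin.sum_univ_four]; try ring
    have hμ := isQPM_traceMeas hst
    have hQ := hcomp 4 (by norm_num) _ hμ
    set P₀ : Matrix (Fin 4) (Fin 4) ℂ := Matrix.diagonal ![1,0,1,0] with hP₀
    set P₁ : Matrix (Fin 4) (Fin 4) ℂ := Matrix.diagonal ![0,1,1,0] with hP₁
    have hP₀proj : IsProjector P₀ := by
      apply isProjector_diagonal_01
      intro i; fin_cases i <;> simp [hP₀]
    have hP₁proj : IsProjector P₁ := by
      apply isProjector_diagonal_01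
      intro i; fin_cases i <;> simp [hP₁]
    have hprod : P₀ * P₁ = Matrix.diagonal ![0,0,1,0] := by
      rw [hP₀, hP₁, Matrix.diagonal_mul_diagonal]
      have hv : (fun i => (![1,0,1,0] : Fin 4 → ℂ) i * ![0,1,1,0] i) = ![(0:ℂ),0,1,0] := by
        funext i; fin_cases i <;> norm_num
      rw [hv]
    have hcommute : P₀ * P₁ = P₁ * P₀ := by
      rw [hP₀, hP₁, Matrix.diagonal_mul_diagonal, Matrix.diagonal_mul_diagonal]
      have hv : (fun i => (![1,0,1,0] : Fin 4 → ℂ) i * ![0,1,1,0] i)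
          = (fun i => (![0,1,1,0] : Fin 4 → ℂ) i * ![1,0,1,0] i) := by
        funext i; fin_cases i <;> norm_num
      rw [hv]
    have hsum : P₀ + P₁ - P₀ * P₁ = Matrix.diagonal ![1,1,1,0] := by
      rw [hprod, hP₀, hP₁, Matrix.diagonal_add, Matrix.diagonal_sub]
      have hv : (fun i => (![1,0,1,0] : Fin 4 → ℂ) i + ![0,1,1,0] i - ![0,0,1,0] i)
          = ![(1:ℂ),1,1,0] := by
        funext i; fin_cases i <;> norm_num
      rw [hv]
    set ρ := Matrix.diagonal (fun i => (w i : ℂ)) with hρ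
    have e₀ : traceMeas ρ P₀ = x₀ + x₂ := by
      rw [hP₀, hρ, traceMeas_diag]; simp [hw, Fin.sum_univ_four]
    have e₁ : traceMeas ρ P₁ = x₁ + x₂ := by
      rw [hP₁, hρ, traceMeas_diag]; simp [hw, Fin.sum_univ_four]
    have e₂ : traceMeas ρ (P₀ * P₁) = x₂ := by
      rw [hprod, hρ, traceMeas_diag]; simp [hw, Fin.sum_univ_four]
    have e₃ : traceMeas ρ (P₀ + P₁ - P₀ * P₁) = x₀ + x₁ + x₂ := by
      rw [hsum, hρ, traceMeas_diag]; simp [hw, Fin.sum_univ_four]; try ring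
    have := hQ.2.2.2.2 P₀ P₁ hP₀proj hP₁proj hcommute
    simp only at this
    rw [e₀, e₁, e₂, e₃] at this
    exact this
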